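/- Let μ and ν be probability measures on ℝ with finite first moments, let r and K₂ < K₁ be reals with r < K₁ and ν((r,∞)) = 0, and let π be a martingale coupling of μ and ν. Then μ((r,∞)) = 0, for every Borel set B ⊆ ℝ the American-put payoff satisfies A(π,B) ≤ K₁ − ∫ x dμ(x), and A(π,ℝ) = K₁ − ∫ x dμ(x); hence the supremum over all martingale couplings and Borel sets of the payoff equals K₁ − ∫ x dμ(x), and it is always optimal to exercise at time 1. -/

import Mathlib

open MeasureTheory Set

/-- The put price function `P_η(k) = ∫ (k-x)⁺ dη(x)`. -/
noncomputable def putPrice (η : Measure ℝ) (k : ℝ) : ℝ := ∫ x, max (k - x) 0 ∂η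

/-- `π` is a martingale coupling of `μ` and `ν`. -/
def IsMartingaleCoupling (μ ν : Measure ℝ) (π : Measure (ℝ × ℝ)) : Prop :=
  IsProbabilityMeasure π ∧ π.map Prod.fst = μ ∧ π.map Prod.snd = ν ∧
    ∀ B : Set ℝ, MeasurableSet B →
      ∫ p in B ×ˢ (Set.univ : Set ℝ), p.2 ∂π = ∫ x in B, x ∂μ

/-- The American-put payoff under coupling `π` and exercise set `B`. -/
noncomputable def amPayoff (K₁ K₂ : ℝ) (π : Measure (ℝ × ℝ)) (B : Set ℝ) : ℝ :=
  ∫ p, (B.indicator (fun x => max (K₁ - x) 0) p.1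
      + Bᶜ.indicator (fun _ => max (K₂ - p.2) 0) p.1) ∂π

theorem aux_key
    (μ ν : Measure ℝ) [IsProbabilityMeasure μ]
    (hμint : Integrable (fun x => x) μ) (hνint : Integrable (fun y => y) ν)
    (r K₁ K₂ : ℝ) (hK : K₂ < K₁) (hr : r < K₁)
    (hν : ν (Set.Ioi r) = 0)
    (π : Measure (ℝ × ℝ)) (hπ : IsMartingaleCoupling μ ν π) :
    μ (Set.Ioi r) = 0 ∧
    (∀ B : Set ℝ, MeasurableSet B → amPayoff K₁ K₂ π B ≤ K₁ - ∫ x, x ∂μ) ∧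
    amPayoff K₁ K₂ π Set.univ = K₁ - ∫ x, x ∂μ := by
  obtain ⟨hprob, hfst, hsnd, hmart⟩ := hπ
  haveI := hprob
  -- integrability of coordinates
  have h1 : Integrable (fun p : ℝ × ℝ => p.1) π := by
    have h := hμint
    rw [← hfst] at h
    exact (integrable_map_measure aestronglyMeasurable_id
      measurable_fst.aemeasurable).mp h
  have h2 : Integrable (fun p : ℝ × ℝ => p.2) π := by
    have h := hνint
    rw [← hsnd] at h
    exact (integrable_map_measure aestronglyMeasurable_id
      measurable_snd.aemeasurable).mp h
  -- measures of preimages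
  have hfst_pre : ∀ B : Set ℝ, MeasurableSet B → π (Prod.fst ⁻¹' B) = μ B := by
    intro B hB
    rw [← hfst, Measure.map_apply measurable_fst hB]
  have hsnd0 : π (Prod.snd ⁻¹' Set.Ioi r) = 0 := by
    rw [← Measure.map_apply measurable_snd measurableSet_Ioi, hsnd]
    exact hν
  have hy : ∀ᵐ p : ℝ × ℝ ∂π, p.2 ≤ r := by
    rw [ae_iff]
    convert hsnd0 using 2
    ext p
    simp [not_le]
  -- set integrals of coordinates
  have hIB : ∀ B : Set ℝ, MeasurableSet B →
      ∫ p in B ×ˢ (Set.univ : Set ℝ), p.1 ∂π = ∫ x in B, x ∂μ := by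
    intro B hB
    rw [← hfst, Set.prod_univ]
    exact (setIntegral_map hB aestronglyMeasurable_id measurable_fst.aemeasurable).symm
  -- μ vanishes above r
  have hμ0 : μ (Set.Ioi r) = 0 := by
    by_contra h0
    have hpos : 0 < μ (Set.Ioi r) := pos_iff_ne_zero.mpr h0
    have hle : ∫ x in Set.Ioi r, x ∂μ ≤ r * (μ (Set.Ioi r)).toReal := by
      rw [← hmart _ measurableSet_Ioi]
      calc ∫ p in Set.Ioi r ×ˢ (Set.univ : Set ℝ), p.2 ∂π
          ≤ ∫ _ in Set.Ioi r ×ˢ (Set.univ : Set ℝ), r ∂π := by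
            apply integral_mono_ae h2.integrableOn (integrable_const r)
            exact ae_restrict_of_ae hy
        _ = (π (Set.Ioi r ×ˢ (Set.univ : Set ℝ))).toReal * r := by
            rw [setIntegral_const]; rfl
        _ = r * (μ (Set.Ioi r)).toReal := by
            rw [Set.prod_univ, hfst_pre _ measurableSet_Ioi, mul_comm]
    have hgt : 0 < ∫ x in Set.Ioi r, (x - r) ∂μ := by
      rw [setIntegral_pos_iff_support_of_nonneg_ae]
      · have : Function.support (fun x : ℝ => x - r) ∩ Set.Ioi r = Set.Ioi r := by
          apply Set.inter_eq_self_of_subset_right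
          intro x hx
          have hrx : r < x := hx
          exact sub_ne_zero.mpr (ne_of_gt hrx)
        rw [this]; exact hpos
      · filter_upwards [ae_restrict_mem measurableSet_Ioi] with x hx
        have : r < x := hx
        simp only [Pi.zero_apply]
        linarith
      · exact hμint.integrableOn.sub (integrable_const r).integrableOn
    rw [integral_sub hμint.integrableOn (integrable_const r),
      setIntegral_const, smul_eq_mul, sub_pos] at hgt
    rw [measureReal_def] at hgt
    linarith
  have hx : ∀ᵐ p : ℝ × ℝ ∂π, p.1 ≤ r := by
    rw [ae_iff]
    have : {p : ℝ × ℝ | ¬ p.1 ≤ r} = Prod.fst ⁻¹' Set.Ioi r := by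
      ext p; simp [not_le]
    rw [this, hfst_pre _ measurableSet_Ioi]
    exact hμ0
  -- rewriting indicators as indicators of preimages
  have ha : ∀ (B : Set ℝ) (f : ℝ → ℝ),
      (fun p : ℝ × ℝ => B.indicator f p.1) = (Prod.fst ⁻¹' B).indicator (fun p => f p.1) := by
    intro B f; ext p; by_cases h : p.1 ∈ B <;> simp [h]
  have hb : ∀ (B : Set ℝ) (g : ℝ × ℝ → ℝ),
      (fun p : ℝ × ℝ => B.indicator (fun _ => g p) p.1)
        = (Prod.fst ⁻¹' B).indicator g := by
    intro B g; ext p; by_cases h : p.1 ∈ B <;> simp [h]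
  -- key identity: expectation of the "martingale pick"
  have hkey : ∀ B : Set ℝ, MeasurableSet B →
      ∫ p : ℝ × ℝ, (B.indicator (fun x => x) p.1 + Bᶜ.indicator (fun _ => p.2) p.1) ∂π
        = ∫ x, x ∂μ := by
    intro B hB
    have e1 : (fun p : ℝ × ℝ => B.indicator (fun x => x) p.1)
        = (Prod.fst ⁻¹' B).indicator (fun p => p.1) := ha B _
    have i1 : Integrable ((Prod.fst ⁻¹' B).indicator (fun p : ℝ × ℝ => p.1)) π :=
      h1.indicator (measurable_fst hB)
    have i2 : Integrable ((Prod.fst ⁻¹' Bᶜ).indicator (fun p : ℝ × ℝ => p.2)) π :=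
      h2.indicator (measurable_fst hB.compl)
    calc ∫ p : ℝ × ℝ, (B.indicator (fun x => x) p.1 + Bᶜ.indicator (fun _ => p.2) p.1) ∂π
        = ∫ p : ℝ × ℝ, ((Prod.fst ⁻¹' B).indicator (fun q : ℝ × ℝ => q.1) p
            + (Prod.fst ⁻¹' Bᶜ).indicator (fun q : ℝ × ℝ => q.2) p) ∂π := by
          refine integral_congr_ae (Filter.Eventually.of_forall fun p => ?_)
          by_cases h : p.1 ∈ B <;> simp [h]
      _ = ∫ p in Prod.fst ⁻¹' B, p.1 ∂π + ∫ p in Prod.fst ⁻¹' Bᶜ, p.2 ∂π := by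
          rw [integral_add i1 i2, integral_indicator (measurable_fst hB),
            integral_indicator (measurable_fst hB.compl)]
      _ = ∫ x in B, x ∂μ + ∫ x in Bᶜ, x ∂μ := by
          rw [← Set.prod_univ, ← Set.prod_univ, hIB B hB, hmart _ hB.compl]
      _ = ∫ x, x ∂μ := integral_add_compl hB hμint
  -- integrability of the payoff integrand pieces
  have ipos1 : Integrable (fun p : ℝ × ℝ => max (K₁ - p.1) 0) π :=
    ((integrable_const K₁).sub h1).pos_part
  have ipos2 : Integrable (fun p : ℝ × ℝ => max (K₂ - p.2) 0) π :=
    ((integrable_const K₂).sub h2).pos_part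
  refine ⟨hμ0, ?_, ?_⟩
  · -- the bound
    intro B hB
    have e1 : (fun p : ℝ × ℝ => B.indicator (fun x => max (K₁ - x) 0) p.1)
        = (Prod.fst ⁻¹' B).indicator (fun p : ℝ × ℝ => max (K₁ - p.1) 0) := ha B _
    have e2 : (fun p : ℝ × ℝ => Bᶜ.indicator (fun _ => max (K₂ - p.2) 0) p.1)
        = (Prod.fst ⁻¹' Bᶜ).indicator (fun p : ℝ × ℝ => max (K₂ - p.2) 0) := by
      ext p; by_cases h : p.1 ∈ B <;> simp [h]
    have ifint : Integrable (fun p : ℝ × ℝ =>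
        (B.indicator (fun x => max (K₁ - x) 0) p.1
          + Bᶜ.indicator (fun _ => max (K₂ - p.2) 0) p.1)) π := by
      apply Integrable.add
      · rw [e1]; exact ipos1.indicator (measurable_fst hB)
      · rw [e2]; exact ipos2.indicator (measurable_fst hB.compl)
    have hsum_int : Integrable (fun p : ℝ × ℝ =>
        (B.indicator (fun x => x) p.1 + Bᶜ.indicator (fun _ => p.2) p.1)) π := by
      apply Integrable.add
      · rw [ha B (fun x => x)]; exact h1.indicator (measurable_fst hB)
      · have e2' : (fun p : ℝ × ℝ => Bᶜ.indicator (fun _ => p.2) p.1)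
            = (Prod.fst ⁻¹' Bᶜ).indicator (fun p : ℝ × ℝ => p.2) := by
          ext p; by_cases h : p.1 ∈ B <;> simp [h]
        rw [e2']; exact h2.indicator (measurable_fst hB.compl)
    have igint : Integrable (fun p : ℝ × ℝ =>
        K₁ - (B.indicator (fun x => x) p.1 + Bᶜ.indicator (fun _ => p.2) p.1)) π :=
      (integrable_const K₁).sub hsum_int
    have hptwise : ∀ᵐ p : ℝ × ℝ ∂π,
        (B.indicator (fun x => max (K₁ - x) 0) p.1
          + Bᶜ.indicator (fun _ => max (K₂ - p.2) 0) p.1)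
        ≤ K₁ - (B.indicator (fun x => x) p.1 + Bᶜ.indicator (fun _ => p.2) p.1) := by
      filter_upwards [hx, hy] with p hpx hpy
      by_cases h : p.1 ∈ B
      · have hmx : max (K₁ - p.1) 0 = K₁ - p.1 := max_eq_left (by linarith)
        simp only [Set.indicator_of_mem h,
          Set.indicator_of_notMem (by simpa using h : p.1 ∉ Bᶜ), hmx]
        linarith
      · have hmx : max (K₂ - p.2) 0 ≤ K₁ - p.2 := max_le (by linarith) (by linarith)
        simp only [Set.indicator_of_notMem h,
          Set.indicator_of_mem (by simpa using h : p.1 ∈ Bᶜ)]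
        linarith
    calc amPayoff K₁ K₂ π B
        ≤ ∫ p : ℝ × ℝ, (K₁ - (B.indicator (fun x => x) p.1
            + Bᶜ.indicator (fun _ => p.2) p.1)) ∂π :=
          integral_mono_ae ifint igint hptwise
      _ = K₁ - ∫ x, x ∂μ := by
          rw [integral_sub (integrable_const K₁) hsum_int, hkey B hB,
            integral_const, probReal_univ]
          simp
  · -- equality for B = univ
    have : amPayoff K₁ K₂ π Set.univ = ∫ p : ℝ × ℝ, max (K₁ - p.1) 0 ∂π := by
      unfold amPayoff
      refine integral_congr_ae (Filter.Eventually.of_forall fun p => ?_)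
      simp
    rw [this]
    have hcongr : ∫ p : ℝ × ℝ, max (K₁ - p.1) 0 ∂π = ∫ p : ℝ × ℝ, (K₁ - p.1) ∂π := by
      apply integral_congr_ae
      filter_upwards [hx] with p hpx
      exact max_eq_left (by linarith)
    rw [hcongr, integral_sub (integrable_const K₁) h1, integral_const, probReal_univ]
    have : ∫ p : ℝ × ℝ, p.1 ∂π = ∫ x, x ∂μ := by
      rw [← hfst]
      exact (integral_map measurable_fst.aemeasurable aestronglyMeasurable_id).symm
    rw [this]; simp

/-- Case `K₁` above the support of `ν`: the underlying never exceeds `r < K₁`, immediate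
exercise is optimal, and the highest price is `K₁ - ∫ x dμ`. -/
theorem immediate_exercise_optimal
    (μ ν : Measure ℝ) [IsProbabilityMeasure μ] [IsProbabilityMeasure ν]
    (hμint : Integrable (fun x => x) μ) (hνint : Integrable (fun y => y) ν)
    (r K₁ K₂ : ℝ) (hK : K₂ < K₁) (hr : r < K₁)
    (hν : ν (Set.Ioi r) = 0)
    (π : Measure (ℝ × ℝ)) (hπ : IsMartingaleCoupling μ ν π) :
    μ (Set.Ioi r) = 0 ∧
    (∀ B : Set ℝ, MeasurableSet B → amPayoff K₁ K₂ π B ≤ K₁ - ∫ x, x ∂μ) ∧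
    amPayoff K₁ K₂ π Set.univ = K₁ - ∫ x, x ∂μ ∧
    sSup { r' : ℝ | ∃ π' : Measure (ℝ × ℝ), ∃ B : Set ℝ,
        IsMartingaleCoupling μ ν π' ∧ MeasurableSet B ∧ r' = amPayoff K₁ K₂ π' B }
      = K₁ - ∫ x, x ∂μ := by
  obtain ⟨h0, hbd, heq⟩ := aux_key μ ν hμint hνint r K₁ K₂ hK hr hν π hπ
  refine ⟨h0, hbd, heq, ?_⟩
  have hmem : K₁ - ∫ x, x ∂μ ∈ { r' : ℝ | ∃ π' : Measure (ℝ × ℝ), ∃ B : Set ℝ,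
      IsMartingaleCoupling μ ν π' ∧ MeasurableSet B ∧ r' = amPayoff K₁ K₂ π' B } :=
    ⟨π, Set.univ, hπ, MeasurableSet.univ, heq.symm⟩
  have hub : ∀ r' ∈ { r' : ℝ | ∃ π' : Measure (ℝ × ℝ), ∃ B : Set ℝ,
      IsMartingaleCoupling μ ν π' ∧ MeasurableSet B ∧ r' = amPayoff K₁ K₂ π' B },
      r' ≤ K₁ - ∫ x, x ∂μ := by
    rintro r' ⟨π', B, hπ', hB, rfl⟩
    exact (aux_key μ ν hμint hνint r K₁ K₂ hK hr hν π' hπ').2.1 B hB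
  exact le_antisymm (csSup_le ⟨_, hmem⟩ hub) (le_csSup ⟨_, hub⟩ hmem)
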